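/- For every even positive integer p, the number T(p) of integer triangles with perimeter p equals the integer nearest to p²/48, i.e. T(p) = round(p²/48). -/

import Mathlib

/-- `T p` is the number of integer triangles with perimeter `p`:
unordered triples of positive integers `a ≤ b ≤ c` with `a + b + c = p`
and `c < a + b`. -/
noncomputable def T (p : ℕ) : ℕ :=
  Nat.card {t : ℕ × ℕ × ℕ //
    0 < t.1 ∧ t.1 ≤ t.2.1 ∧ t.2.1 ≤ t.2.2 ∧ t.2.2 < t.1 + t.2.1 ∧ t.1 + t.2.1 + t.2.2 = p}

/-- triangles with perimeter `p`, as a finset -/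
def Tri (p : ℕ) : Finset (ℕ × ℕ × ℕ) :=
  ((Finset.range (p+1)) ×ˢ (Finset.range (p+1)) ×ˢ (Finset.range (p+1))).filter
    (fun t => 0 < t.1 ∧ t.1 ≤ t.2.1 ∧ t.2.1 ≤ t.2.2 ∧ t.2.2 < t.1 + t.2.1 ∧
      t.1 + t.2.1 + t.2.2 = p)

/-- partitions of `m` into 3 positive parts `a ≤ b ≤ c`, as a finset -/
def Ptn (m : ℕ) : Finset (ℕ × ℕ × ℕ) :=
  ((Finset.range (m+1)) ×ˢ (Finset.range (m+1)) ×ˢ (Finset.range (m+1))).filter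
    (fun t => 0 < t.1 ∧ t.1 ≤ t.2.1 ∧ t.2.1 ≤ t.2.2 ∧ t.1 + t.2.1 + t.2.2 = m)

lemma mem_Tri {p a b c : ℕ} :
    (a, b, c) ∈ Tri p ↔ 0 < a ∧ a ≤ b ∧ b ≤ c ∧ c < a + b ∧ a + b + c = p := by
  simp only [Tri, Finset.mem_filter, Finset.mem_product, Finset.mem_range]
  constructor
  · rintro ⟨_, h⟩; exact h
  · intro h; omega

lemma mem_Ptn {m a b c : ℕ} :
    (a, b, c) ∈ Ptn m ↔ 0 < a ∧ a ≤ b ∧ b ≤ c ∧ a + b + c = m := by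
  simp only [Ptn, Finset.mem_filter, Finset.mem_product, Finset.mem_range]
  constructor
  · rintro ⟨_, h⟩; exact h
  · intro h; omega

lemma T_eq_card (p : ℕ) : T p = (Tri p).card := by
  have hset : {t : ℕ × ℕ × ℕ |
      0 < t.1 ∧ t.1 ≤ t.2.1 ∧ t.2.1 ≤ t.2.2 ∧ t.2.2 < t.1 + t.2.1 ∧
        t.1 + t.2.1 + t.2.2 = p} = ↑(Tri p) := by
    ext ⟨a, b, c⟩
    simp only [Set.mem_setOf_eq, Finset.coe_filter, Finset.mem_coe, mem_Tri]
  have : T p = Nat.card ({t : ℕ × ℕ × ℕ |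
      0 < t.1 ∧ t.1 ≤ t.2.1 ∧ t.2.1 ≤ t.2.2 ∧ t.2.2 < t.1 + t.2.1 ∧
        t.1 + t.2.1 + t.2.2 = p} : Set (ℕ × ℕ × ℕ)) := rfl
  rw [this, hset, Nat.card_coe_set_eq, Set.ncard_coe_finset]

lemma Tri_card_eq_Ptn (m : ℕ) : (Tri (2 * m)).card = (Ptn m).card := by
  apply Finset.card_nbij' (i := fun t => (m - t.2.2, m - t.2.1, m - t.1))
    (j := fun t => (m - t.2.2, m - t.2.1, m - t.1))
  · rintro ⟨a, b, c⟩ ht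
    rw [Finset.mem_coe, mem_Tri] at ht
    dsimp only
    rw [Finset.mem_coe, mem_Ptn]
    omega
  · rintro ⟨a, b, c⟩ ht
    rw [Finset.mem_coe, mem_Ptn] at ht
    dsimp only
    rw [Finset.mem_coe, mem_Tri]
    omega
  · rintro ⟨a, b, c⟩ ht
    rw [Finset.mem_coe, mem_Tri] at ht
    dsimp only
    simp only [Prod.mk.injEq]
    omega
  · rintro ⟨a, b, c⟩ ht
    rw [Finset.mem_coe, mem_Ptn] at ht
    dsimp only
    simp only [Prod.mk.injEq]
    omega

lemma Ptn_card_succ6 (m : ℕ) : (Ptn (m + 6)).card = (Ptn m).card + (m + 3) := by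
  classical
  have hsplit := Finset.card_filter_add_card_filter_not
    (s := Ptn (m + 6)) (p := fun t => 3 ≤ t.1)
  have hA : ((Ptn (m + 6)).filter (fun t => 3 ≤ t.1)).card = (Ptn m).card := by
    apply Finset.card_nbij' (i := fun t => (t.1 - 2, t.2.1 - 2, t.2.2 - 2))
      (j := fun t => (t.1 + 2, t.2.1 + 2, t.2.2 + 2))
    · rintro ⟨a, b, c⟩ ht
      simp only [Finset.mem_coe, Finset.mem_filter, mem_Ptn] at ht
      dsimp only
      rw [Finset.mem_coe, mem_Ptn]
      omega
    · rintro ⟨a, b, c⟩ ht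
      rw [Finset.mem_coe, mem_Ptn] at ht
      dsimp only
      simp only [Finset.mem_coe, Finset.mem_filter, mem_Ptn]
      omega
    · rintro ⟨a, b, c⟩ ht
      simp only [Finset.mem_coe, Finset.mem_filter, mem_Ptn] at ht
      dsimp only
      simp only [Prod.mk.injEq]
      omega
    · rintro ⟨a, b, c⟩ ht
      rw [Finset.mem_coe, mem_Ptn] at ht
      dsimp only
      simp only [Prod.mk.injEq]
      omega
  have hB : ((Ptn (m + 6)).filter (fun t => ¬ 3 ≤ t.1)).card = m + 3 := by
    have heq : (Ptn (m + 6)).filter (fun t => ¬ 3 ≤ t.1) =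
        (Finset.Ioc 0 ((m + 5) / 2)).image (fun b => (1, b, m + 5 - b)) ∪
        (Finset.Ioc 1 ((m + 4) / 2)).image (fun b => (2, b, m + 4 - b)) := by
      ext ⟨a, b, c⟩
      simp only [Finset.mem_filter, mem_Ptn, Finset.mem_union, Finset.mem_image,
        Finset.mem_Ioc, Prod.mk.injEq]
      constructor
      · rintro ⟨⟨ha, hab, hbc, hsum⟩, ha3⟩
        interval_cases a
        · exact Or.inl ⟨b, ⟨by omega, by omega⟩, rfl, rfl, by omega⟩
        · exact Or.inr ⟨b, ⟨by omega, by omega⟩, rfl, rfl, by omega⟩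
      · rintro (⟨x, hx, h1, h2, h3⟩ | ⟨x, hx, h1, h2, h3⟩) <;> omega
    rw [heq, Finset.card_union_of_disjoint, Finset.card_image_of_injective,
      Finset.card_image_of_injective, Nat.card_Ioc, Nat.card_Ioc]
    · omega
    · intro x y h
      simpa using congrArg (fun t => t.2.1) h
    · intro x y h
      simpa using congrArg (fun t => t.2.1) h
    · rw [Finset.disjoint_left]
      rintro ⟨a, b, c⟩ h1 h2
      simp only [Finset.mem_image, Finset.mem_Ioc, Prod.mk.injEq] at h1 h2
      obtain ⟨x, _, hx1, _, _⟩ := h1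
      obtain ⟨y, _, hy1, _, _⟩ := h2
      omega
  omega

lemma Ptn_card_eq (m : ℕ) : ((Ptn m).card : ℤ) = ((m : ℤ) ^ 2 + 6) / 12 := by
  induction m using Nat.strong_induction_on with
  | _ m ih =>
    rcases lt_or_ge m 6 with h | h
    · interval_cases m <;> decide
    · obtain ⟨n, rfl⟩ : ∃ n, m = n + 6 := ⟨m - 6, by omega⟩
      rw [Ptn_card_succ6]
      have hn := ih n (by omega)
      have hsq : ((n : ℤ) + 6) ^ 2 = (n : ℤ) ^ 2 + 12 * (n : ℤ) + 36 := by ring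
      push_cast
      rw [hsq]
      generalize (n : ℤ) ^ 2 = k at hn ⊢
      omega

theorem integer_triangles_even_perimeter (p : ℕ) (hp : 0 < p) (heven : Even p) :
    (T p : ℤ) = round ((p : ℚ) ^ 2 / 48) := by
  obtain ⟨m, rfl⟩ := heven
  have h2 : m + m = 2 * m := by ring
  rw [h2, T_eq_card, Tri_card_eq_Ptn, Ptn_card_eq, round_eq]
  have : ((2 * m : ℕ) : ℚ) ^ 2 / 48 + 1 / 2 = (((m : ℤ) ^ 2 + 6 : ℤ) : ℚ) / ((12 : ℕ) : ℚ) := by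
    push_cast
    ring
  rw [this, Rat.floor_intCast_div_natCast]
  norm_num
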